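/- arXiv:1709.08051 — 3 statements merged into one kernel-verified Lean document; each statement's English description precedes it below -/
import Mathlib

section
/- Let (R, ρ, E) be a partial A-comodule algebra over a regular multiplier Hopf algebra A. Then E ρ(x) = ρ(x) and ρ(x) E = ρ(x) for all x ∈ R. -/
/- ## Preliminaries: multiplier algebras and (regular) multiplier Hopf algebras -/

open scoped TensorProduct
open TensorProduct LinearMap
set_option linter.unusedSectionVars false

noncomputable section

variable (k : Type*) [Field k]

section MultiplierAlgebra

variable (A : Type*) [NonUnitalRing A] [Module k A] [SMulCommClass k A A] [IsScalarTower k A A]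

/-- The product of an algebra is *nondegenerate*. -/
def NondegProd : Prop :=
  (∀ a : A, (∀ b : A, a * b = 0) → a = 0) ∧ ∀ b : A, (∀ a : A, a * b = 0) → b = 0

/-- A multiplier of `A`: a pair `(U, V)` of linear maps with `U (a*b) = U a * b`,
`V (a*b) = a * V b` and `V a * b = a * U b`. -/
@[ext] structure Multiplier where
  U : A →ₗ[k] A
  V : A →ₗ[k] A
  U_mul : ∀ a b : A, U (a * b) = U a * b
  V_mul : ∀ a b : A, V (a * b) = a * V b
  compat : ∀ a b : A, V a * b = a * U b

namespace Multiplier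

variable {k A}

instance : Zero (Multiplier k A) := ⟨⟨0, 0, by simp, by simp, by simp⟩⟩
instance : Add (Multiplier k A) :=
  ⟨fun m n => ⟨m.U + n.U, m.V + n.V,
    by simp [m.U_mul, n.U_mul, add_mul],
    by simp [m.V_mul, n.V_mul, mul_add],
    by simp [add_mul, mul_add, m.compat, n.compat]⟩⟩
instance : Neg (Multiplier k A) :=
  ⟨fun m => ⟨-m.U, -m.V, by simp [m.U_mul], by simp [m.V_mul],
    by simp [m.compat]⟩⟩
instance : SMul k (Multiplier k A) :=
  ⟨fun c m => ⟨c • m.U, c • m.V,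
    by simp [m.U_mul, smul_mul_assoc],
    by simp [m.V_mul, mul_smul_comm],
    by simp [smul_mul_assoc, mul_smul_comm, m.compat]⟩⟩

@[simp] lemma zero_U : (0 : Multiplier k A).U = 0 := rfl
@[simp] lemma zero_V : (0 : Multiplier k A).V = 0 := rfl
@[simp] lemma add_U (m n : Multiplier k A) : (m + n).U = m.U + n.U := rfl
@[simp] lemma add_V (m n : Multiplier k A) : (m + n).V = m.V + n.V := rfl
@[simp] lemma neg_U (m : Multiplier k A) : (-m).U = -m.U := rfl
@[simp] lemma neg_V (m : Multiplier k A) : (-m).V = -m.V := rfl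
@[simp] lemma smul_U (c : k) (m : Multiplier k A) : (c • m).U = c • m.U := rfl
@[simp] lemma smul_V (c : k) (m : Multiplier k A) : (c • m).V = c • m.V := rfl

instance : AddCommGroup (Multiplier k A) where
  add_assoc a b c := by ext x <;> simp [add_assoc]
  zero_add a := by ext x <;> simp
  add_zero a := by ext x <;> simp
  add_comm a b := by ext x <;> simp [add_comm]
  neg_add_cancel a := by ext x <;> simp
  nsmul := nsmulRec
  zsmul := zsmulRec

instance : Module k (Multiplier k A) where
  one_smul m := by ext x <;> simp
  mul_smul c d m := by ext x <;> simp [mul_smul]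
  smul_zero c := by ext x <;> simp
  smul_add c m n := by ext x <;> simp
  add_smul c d m := by ext x <;> simp [add_smul]
  zero_smul m := by ext x <;> simp

instance : One (Multiplier k A) := ⟨⟨LinearMap.id, LinearMap.id, by simp, by simp, by simp⟩⟩
instance : Mul (Multiplier k A) :=
  ⟨fun m n => ⟨m.U ∘ₗ n.U, n.V ∘ₗ m.V,
    by simp [n.U_mul, m.U_mul],
    by simp [m.V_mul, n.V_mul],
    by intro a b; simp only [LinearMap.comp_apply]; rw [n.compat, m.compat]⟩⟩

@[simp] lemma one_U : (1 : Multiplier k A).U = LinearMap.id := rfl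
@[simp] lemma one_V : (1 : Multiplier k A).V = LinearMap.id := rfl
@[simp] lemma mul_U (m n : Multiplier k A) : (m * n).U = m.U ∘ₗ n.U := rfl
@[simp] lemma mul_V (m n : Multiplier k A) : (m * n).V = n.V ∘ₗ m.V := rfl

instance : Monoid (Multiplier k A) where
  mul_assoc a b c := by ext x <;> simp
  one_mul a := by ext x <;> simp
  mul_one a := by ext x <;> simp

/-- The canonical map `A → M(A)` given by left and right multiplication. -/
def incl (a : A) : Multiplier k A :=
  ⟨LinearMap.mulLeft k a, LinearMap.mulRight k a,
    fun b c => by simp [mul_assoc], fun b c => by simp [mul_assoc],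
    fun b c => by simp [mul_assoc]⟩

@[simp] lemma incl_U (a b : A) : (incl (k := k) a).U b = a * b := rfl
@[simp] lemma incl_V (a b : A) : (incl (k := k) a).V b = b * a := rfl

/-- The canonical map `A → M(A)` as a linear map. -/
def inclL : A →ₗ[k] Multiplier k A where
  toFun := incl
  map_add' a b := by ext x <;> simp [add_mul, mul_add]
  map_smul' c a := by ext x <;> simp [smul_mul_assoc, mul_smul_comm]

@[simp] lemma inclL_apply (a : A) : (inclL (k := k) a) = incl a := rfl

/-- The `U`-component, as a linear map. -/
def Ulm : Multiplier k A →ₗ[k] A →ₗ[k] A where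
  toFun m := m.U
  map_add' _ _ := rfl
  map_smul' _ _ := rfl

/-- The `V`-component, as a linear map. -/
def Vlm : Multiplier k A →ₗ[k] A →ₗ[k] A where
  toFun m := m.V
  map_add' _ _ := rfl
  map_smul' _ _ := rfl

end Multiplier

end MultiplierAlgebra

section Tensor

variable (R : Type*) [NonUnitalRing R] [Module k R] [SMulCommClass k R R] [IsScalarTower k R R]
variable (A : Type*) [NonUnitalRing A] [Module k A] [SMulCommClass k A A] [IsScalarTower k A A]

/-- The multiplier `1 ⊗ a` of `R ⊗ A`. -/
def oneT (a : A) : Multiplier k (R ⊗[k] A) where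
  U := lTensor R (LinearMap.mulLeft k a)
  V := lTensor R (LinearMap.mulRight k a)
  U_mul u v := by
    induction u with
    | zero => simp
    | add u₁ u₂ h₁ h₂ => simp [add_mul, h₁, h₂]
    | tmul x b =>
      induction v with
      | zero => simp
      | add v₁ v₂ h₁ h₂ => simp [mul_add, h₁, h₂]
      | tmul y c => simp [Algebra.TensorProduct.tmul_mul_tmul, mul_assoc]
  V_mul u v := by
    induction u with
    | zero => simp
    | add u₁ u₂ h₁ h₂ => simp [add_mul, h₁, h₂]
    | tmul x b =>
      induction v with
      | zero => simp
      | add v₁ v₂ h₁ h₂ => simp [mul_add, h₁, h₂]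
      | tmul y c => simp [Algebra.TensorProduct.tmul_mul_tmul, mul_assoc]
  compat u v := by
    induction u with
    | zero => simp
    | add u₁ u₂ h₁ h₂ => simp [add_mul, h₁, h₂]
    | tmul x b =>
      induction v with
      | zero => simp
      | add v₁ v₂ h₁ h₂ => simp only [map_add, mul_add, h₁, h₂]
      | tmul y c => simp [Algebra.TensorProduct.tmul_mul_tmul, mul_assoc]

/-- The multiplier `x ⊗ 1` of `R ⊗ A`. -/
def tOne (x : R) : Multiplier k (R ⊗[k] A) where
  U := rTensor A (LinearMap.mulLeft k x)
  V := rTensor A (LinearMap.mulRight k x)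
  U_mul u v := by
    induction u with
    | zero => simp
    | add u₁ u₂ h₁ h₂ => simp [add_mul, h₁, h₂]
    | tmul y b =>
      induction v with
      | zero => simp
      | add v₁ v₂ h₁ h₂ => simp [mul_add, h₁, h₂]
      | tmul z c => simp [Algebra.TensorProduct.tmul_mul_tmul, mul_assoc]
  V_mul u v := by
    induction u with
    | zero => simp
    | add u₁ u₂ h₁ h₂ => simp [add_mul, h₁, h₂]
    | tmul y b =>
      induction v with
      | zero => simp
      | add v₁ v₂ h₁ h₂ => simp [mul_add, h₁, h₂]
      | tmul z c => simp [Algebra.TensorProduct.tmul_mul_tmul, mul_assoc]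
  compat u v := by
    induction u with
    | zero => simp
    | add u₁ u₂ h₁ h₂ => simp [add_mul, h₁, h₂]
    | tmul y b =>
      induction v with
      | zero => simp
      | add v₁ v₂ h₁ h₂ => simp only [map_add, mul_add, h₁, h₂]
      | tmul z c => simp [Algebra.TensorProduct.tmul_mul_tmul, mul_assoc]

/-- The multiplier `m ⊗ a` of `R ⊗ A`, for `m ∈ M(R)`, `a ∈ A`. -/
def mtensor (m : Multiplier k R) (a : A) : Multiplier k (R ⊗[k] A) where
  U := map m.U (LinearMap.mulLeft k a)
  V := map m.V (LinearMap.mulRight k a)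
  U_mul u v := by
    induction u with
    | zero => simp
    | add u₁ u₂ h₁ h₂ => simp [add_mul, h₁, h₂]
    | tmul y b =>
      induction v with
      | zero => simp
      | add v₁ v₂ h₁ h₂ => simp [mul_add, h₁, h₂]
      | tmul z c => simp [Algebra.TensorProduct.tmul_mul_tmul, mul_assoc, m.U_mul]
  V_mul u v := by
    induction u with
    | zero => simp
    | add u₁ u₂ h₁ h₂ => simp [add_mul, h₁, h₂]
    | tmul y b =>
      induction v with
      | zero => simp
      | add v₁ v₂ h₁ h₂ => simp [mul_add, h₁, h₂]
      | tmul z c => simp [Algebra.TensorProduct.tmul_mul_tmul, mul_assoc, m.V_mul]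
  compat u v := by
    induction u with
    | zero => simp
    | add u₁ u₂ h₁ h₂ => simp [add_mul, h₁, h₂]
    | tmul y b =>
      induction v with
      | zero => simp
      | add v₁ v₂ h₁ h₂ => simp only [map_add, mul_add, h₁, h₂]
      | tmul z c => simp [Algebra.TensorProduct.tmul_mul_tmul, mul_assoc, m.compat]

/-- The multiplier `m ⊗ 1` of `R ⊗ A`, for `m ∈ M(R)`. -/
def mtensorOne (m : Multiplier k R) : Multiplier k (R ⊗[k] A) where
  U := map m.U LinearMap.id
  V := map m.V LinearMap.id
  U_mul u v := by
    induction u with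
    | zero => simp
    | add u₁ u₂ h₁ h₂ => simp [add_mul, h₁, h₂]
    | tmul y b =>
      induction v with
      | zero => simp
      | add v₁ v₂ h₁ h₂ => simp [mul_add, h₁, h₂]
      | tmul z c => simp [Algebra.TensorProduct.tmul_mul_tmul, m.U_mul]
  V_mul u v := by
    induction u with
    | zero => simp
    | add u₁ u₂ h₁ h₂ => simp [add_mul, h₁, h₂]
    | tmul y b =>
      induction v with
      | zero => simp
      | add v₁ v₂ h₁ h₂ => simp [mul_add, h₁, h₂]
      | tmul z c => simp [Algebra.TensorProduct.tmul_mul_tmul, m.V_mul]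
  compat u v := by
    induction u with
    | zero => simp
    | add u₁ u₂ h₁ h₂ => simp [add_mul, h₁, h₂]
    | tmul y b =>
      induction v with
      | zero => simp
      | add v₁ v₂ h₁ h₂ => simp only [map_add, mul_add, h₁, h₂]
      | tmul z c => simp [Algebra.TensorProduct.tmul_mul_tmul, m.compat]

/-- Apply a functional to the second tensor factor:  `x ⊗ a ↦ f a • x`. -/
def apT (f : A →ₗ[k] k) : R ⊗[k] A →ₗ[k] R :=
  (TensorProduct.rid k R).toLinearMap ∘ₗ lTensor R f

@[simp] lemma apT_tmul (f : A →ₗ[k] k) (x : R) (a : A) :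
    apT k R A f (x ⊗ₜ a) = f a • x := rfl

/-- Sum of pure tensors attached to a list of pairs. -/
def psum {M N : Type*} [AddCommGroup M] [Module k M] [AddCommGroup N] [Module k N]
    (l : List (M × N)) : M ⊗[k] N :=
  (l.map fun p => p.1 ⊗ₜ[k] p.2).sum

end Tensor
section MHAdef

variable (A : Type*) [NonUnitalRing A] [Module k A] [SMulCommClass k A A] [IsScalarTower k A A]

/-- Apply a functional to the first tensor factor: `a ⊗ b ↦ f a • b`. -/
def apF (f : A →ₗ[k] k) : A ⊗[k] A →ₗ[k] A :=
  (TensorProduct.lid k A).toLinearMap ∘ₗ rTensor A f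

@[simp] lemma apF_tmul (f : A →ₗ[k] k) (a b : A) : apF k A f (a ⊗ₜ b) = f a • b := rfl

/-- A *regular multiplier Hopf algebra* structure on a nondegenerate algebra `A`:
a comultiplication `Δ : A → M(A ⊗ A)` such that the four Galois-type maps
`T1 : a ⊗ b ↦ Δ(a)(1 ⊗ b)`, `T2 : a ⊗ b ↦ (a ⊗ 1)Δ(b)`, `T3 : a ⊗ b ↦ Δ(a)(b ⊗ 1)`,
`T4 : a ⊗ b ↦ (1 ⊗ b)Δ(a)` are (well-defined and) bijective from `A ⊗ A` onto `A ⊗ A`,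
together with its counit `ε` and (bijective) antipode `S`, subject to the usual axioms
(coassociativity and the counit and antipode laws, in their `T1`/`T2`-covered form). -/
structure MHA where
  nondeg : NondegProd A
  comul : A →ₗ[k] Multiplier k (A ⊗[k] A)
  comul_mul : ∀ a b : A, comul (a * b) = comul a * comul b
  T1 : A ⊗[k] A ≃ₗ[k] A ⊗[k] A
  T2 : A ⊗[k] A ≃ₗ[k] A ⊗[k] A
  T3 : A ⊗[k] A ≃ₗ[k] A ⊗[k] A
  T4 : A ⊗[k] A ≃ₗ[k] A ⊗[k] A
  hT1 : ∀ a b : A, comul a * oneT k A A b = Multiplier.incl (T1 (a ⊗ₜ b))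
  hT2 : ∀ a b : A, tOne k A A a * comul b = Multiplier.incl (T2 (a ⊗ₜ b))
  hT3 : ∀ a b : A, comul a * tOne k A A b = Multiplier.incl (T3 (a ⊗ₜ b))
  hT4 : ∀ a b : A, oneT k A A b * comul a = Multiplier.incl (T4 (a ⊗ₜ b))
  coassoc : ∀ a b c : A,
    (TensorProduct.assoc k A A A)
        ((rTensor A (T2.toLinearMap ∘ₗ TensorProduct.mk k A A a)) (T1 (b ⊗ₜ c)))
      = (lTensor A (T1.toLinearMap ∘ₗ (TensorProduct.mk k A A).flip c)) (T2 (a ⊗ₜ b))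
  counit : A →ₗ[k] k
  counit_mul : ∀ a b : A, counit (a * b) = counit a * counit b
  hcounit1 : ∀ a b : A, apF k A counit (T1 (a ⊗ₜ b)) = a * b
  hcounit2 : ∀ a b : A, apT k A A counit (T2 (a ⊗ₜ b)) = a * b
  S : A ≃ₗ[k] A
  S_antimul : ∀ a b : A, S (a * b) = S b * S a
  hS1 : ∀ a b : A, LinearMap.mul' k A ((rTensor A S.toLinearMap) (T1 (a ⊗ₜ b))) = counit a • b
  hS2 : ∀ a b : A, LinearMap.mul' k A ((lTensor A S.toLinearMap) (T2 (a ⊗ₜ b))) = counit b • a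

end MHAdef

section PComod

variable {k}
variable {A : Type*} [NonUnitalRing A] [Module k A] [SMulCommClass k A A] [IsScalarTower k A A]
variable (H : MHA k A)
variable (R : Type*) [NonUnitalRing R] [Module k R] [SMulCommClass k R R] [IsScalarTower k R R]

/-- `(R, ρ, E)` is a *partial `A`-comodule algebra* (Definition 3.5).  The data
`rmap`/`lmap` records the elements `ρ(x)(1 ⊗ a)` and `(1 ⊗ a)ρ(x)` of `R ⊗ A`.
Condition `c3` is the coassociativity
`(ρ ⊗ ι)(ρ(x)) = (E ⊗ 1)(ι ⊗ Δ)(ρ(x))` in its fully covered form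
`x⁽⁰⁾⁽⁰⁾ ⊗ x⁽⁰⁾⁽¹⁾a ⊗ x⁽¹⁾b = Σᵢ E(x⁽⁰⁾ ⊗ (x⁽¹⁾aᵢ)₍₁₎) ⊗ (x⁽¹⁾aᵢ)₍₂₎bᵢ`
for any representation `Σᵢ aᵢ ⊗ bᵢ = T1⁻¹(a ⊗ b)`. -/
structure IsPComod (ρ : R →ₗ[k] Multiplier k (R ⊗[k] A)) (E : Multiplier k (R ⊗[k] A))
    (rmap : R →ₗ[k] A →ₗ[k] R ⊗[k] A) (lmap : A →ₗ[k] R →ₗ[k] R ⊗[k] A) : Prop where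
  ρ_mul : ∀ x y : R, ρ (x * y) = ρ x * ρ y
  ρ_inj : Function.Injective ρ
  E_idem : E * E = E
  hrmap : ∀ (x : R) (a : A), ρ x * oneT k R A a = Multiplier.incl (rmap x a)
  hlmap : ∀ (a : A) (x : R), oneT k R A a * ρ x = Multiplier.incl (lmap a x)
  c1l : ∀ a : A, ∃ l : List (Multiplier k R × A),
      oneT k R A a * E = (l.map fun p => mtensor k R A p.1 p.2).sum
  c1r : ∀ a : A, ∃ l : List (Multiplier k R × A),
      E * oneT k R A a = (l.map fun p => mtensor k R A p.1 p.2).sum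
  c2l : ∀ (x : R) (a : A), ∃ u : R ⊗[k] A, rmap x a = E.U u
  c2r : ∀ (a : A) (x : R), ∃ u : R ⊗[k] A, lmap a x = E.V u
  c3 : ∀ (x : R) (a b : A) (l : List (A × A)), psum k l = H.T1.symm (a ⊗ₜ b) →
      rTensor A (rmap.flip a) (rmap x b)
        = (l.map fun p => (rTensor A E.U) ((TensorProduct.assoc k R A A).symm
            ((lTensor R (H.T1.toLinearMap ∘ₗ (TensorProduct.mk k A A).flip p.2))
              (rmap x p.1)))).sum

/-- A *symmetric* partial `A`-comodule algebra (Definition 3.5 (iv)):  additionally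
`(ρ ⊗ ι)(ρ(x)) = (ι ⊗ Δ)(ρ(x))(E ⊗ 1)`, in the fully covered form
`x⁽⁰⁾⁽⁰⁾ ⊗ ax⁽⁰⁾⁽¹⁾ ⊗ bx⁽¹⁾ = Σᵢ (x⁽⁰⁾ ⊗ (aᵢx⁽¹⁾)₍₁₎)E ⊗ bᵢ(aᵢx⁽¹⁾)₍₂₎` for any
representation `Σᵢ aᵢ ⊗ bᵢ = T4⁻¹(a ⊗ b)`. -/
structure IsSymPComod (ρ : R →ₗ[k] Multiplier k (R ⊗[k] A)) (E : Multiplier k (R ⊗[k] A))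
    (rmap : R →ₗ[k] A →ₗ[k] R ⊗[k] A) (lmap : A →ₗ[k] R →ₗ[k] R ⊗[k] A)
    extends IsPComod H R ρ E rmap lmap : Prop where
  c4 : ∀ (x : R) (a b : A) (l : List (A × A)), psum k l = H.T4.symm (a ⊗ₜ b) →
      rTensor A (lmap a) (lmap b x)
        = (l.map fun p => (rTensor A E.V) ((TensorProduct.assoc k R A A).symm
            ((lTensor R (H.T4.toLinearMap ∘ₗ (TensorProduct.mk k A A).flip p.2))
              (lmap p.1 x)))).sum

/-- `R` is a (global) right `A`-comodule algebra via `ρ` (Definition 3.1), with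
`rmap`/`lmap` recording `ρ(x)(1 ⊗ a) ∈ R ⊗ A` and `(1 ⊗ a)ρ(x) ∈ R ⊗ A`;
coassociativity `(ρ ⊗ ι)ρ = (ι ⊗ Δ)ρ` is stated in its fully covered form. -/
structure IsComod (ρ : R →ₗ[k] Multiplier k (R ⊗[k] A))
    (rmap : R →ₗ[k] A →ₗ[k] R ⊗[k] A) (lmap : A →ₗ[k] R →ₗ[k] R ⊗[k] A) : Prop where
  ρ_mul : ∀ x y : R, ρ (x * y) = ρ x * ρ y
  ρ_inj : Function.Injective ρ
  hrmap : ∀ (x : R) (a : A), ρ x * oneT k R A a = Multiplier.incl (rmap x a)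
  hlmap : ∀ (a : A) (x : R), oneT k R A a * ρ x = Multiplier.incl (lmap a x)
  coassoc : ∀ (x : R) (a b : A) (l : List (A × A)), psum k l = H.T1.symm (a ⊗ₜ b) →
      rTensor A (rmap.flip a) (rmap x b)
        = (l.map fun p => (TensorProduct.assoc k R A A).symm
            ((lTensor R (H.T1.toLinearMap ∘ₗ (TensorProduct.mk k A A).flip p.2))
              (rmap x p.1))).sum

end PComod
section PMod

variable {k}
variable {A : Type*} [NonUnitalRing A] [Module k A] [SMulCommClass k A A] [IsScalarTower k A A]
variable (H : MHA k A)
variable (R : Type*) [NonUnitalRing R] [Module k R] [SMulCommClass k R R] [IsScalarTower k R R]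

/-- `(R, ⬝, 𝔢)` is a *partial `A`-module algebra* (Definition 4.5).  Sweedler
expressions are stated for arbitrary list representations of the corresponding
covered elements; e.g. condition (i) reads
`a ⬝ (x (b ⬝ y)) = Σᵢ (pᵢ ⬝ x)(qᵢ ⬝ y)` whenever `Σᵢ pᵢ ⊗ qᵢ = Δ(a)(1 ⊗ b) = T1(a ⊗ b)`,
and in (ii) one uses the covering `a₍₁₎ ⊗ S(a₍₂₎)b = (ι ⊗ S)((1 ⊗ S⁻¹(b))Δ(a))`. -/
structure IsPModAlg (act : A →ₗ[k] R →ₗ[k] R) (e : A →ₗ[k] Multiplier k R) : Prop where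
  cond1 : ∀ (a b : A) (x y : R) (l : List (A × A)), psum k l = H.T1 (a ⊗ₜ b) →
      act a (x * act b y) = (l.map fun p => act p.1 x * act p.2 y).sum
  cond2a : ∀ (a b : A) (x : R) (l : List (A × A)), psum k l = H.T4 (a ⊗ₜ H.S.symm b) →
      (e a).U (act b x) = (l.map fun p => act p.1 (act (H.S p.2) x)).sum
  cond2b : ∀ (a : A) (x : R),
      (e a).U x ∈ Submodule.span k {z : R | ∃ (b : A) (y : R), z = act b y}
  cond3 : ∀ (la : List A) (lx : List R), ∃ b : A,
      (∀ a ∈ la, a * b = a ∧ b * a = a) ∧ ∀ a ∈ la, ∀ x ∈ lx, act a x = act a (act b x)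
  cond4 : ∀ x : R, (∀ a : A, act a x = 0) → x = 0

/-- A *symmetric* partial `A`-module algebra (Definition 4.5 (v)-(vii)).  In (vi),
one uses the covering `a₍₂₎ ⊗ S⁻¹(a₍₁₎)b = σ((S⁻¹ ⊗ ι)((S(b) ⊗ 1)Δ(a)))`. -/
structure IsSymPModAlg (act : A →ₗ[k] R →ₗ[k] R) (e : A →ₗ[k] Multiplier k R)
    extends IsPModAlg H R act e : Prop where
  cond5 : ∀ (a b : A) (x y : R) (l : List (A × A)), psum k l = H.T3 (a ⊗ₜ b) →
      act a (act b x * y) = (l.map fun p => act p.1 x * act p.2 y).sum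
  cond6 : ∀ (a b : A) (x : R) (l : List (A × A)), psum k l = H.T2 (H.S b ⊗ₜ a) →
      (e a).V (act b x) = (l.map fun p => act p.2 (act (H.S.symm p.1) x)).sum
  cond7 : ∀ (a : A) (x : R),
      (e a).V x ∈ Submodule.span k {z : R | ∃ (b : A) (y : R), z = act b y}

/-- `R` is a (global, unitary) left `A`-module algebra (Definition 4.1). -/
structure IsModAlg (act : A →ₗ[k] R →ₗ[k] R) : Prop where
  assoc : ∀ (a b : A) (x : R), act a (act b x) = act (a * b) x
  unital : Submodule.span k {z : R | ∃ (a : A) (x : R), z = act a x} = ⊤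
  mul_cond : ∀ (a b : A) (x y : R) (l : List (A × A)), psum k l = H.T1 (a ⊗ₜ b) →
      act a (x * act b y) = (l.map fun p => act p.1 x * act p.2 y).sum

end PMod

section Dual

variable {k}
variable {A : Type*} [NonUnitalRing A] [Module k A] [SMulCommClass k A A] [IsScalarTower k A A]
variable (H : MHA k A)
variable (Ahat : Type*) [NonUnitalRing Ahat] [Module k Ahat] [SMulCommClass k Ahat Ahat]
  [IsScalarTower k Ahat Ahat] (Hh : MHA k Ahat)

/-- A realization of the *dual* `Â = {φ(– a) : a ∈ A}` of a regular multiplier Hopf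
algebra `A` with left integral `φ` (as in (2.1)): a regular multiplier Hopf algebra
`Â` together with the linear bijections `hat : a ↦ φ(– a)` and `hat' : b ↦ φ(b –)`,
the evaluation pairing `ev`, the product rule `(ŵ û)(c) = (w ⊗ u)(Δ c)`, the
coproduct rules (2.5) and (2.6) read through `hat`, and the modular element
`δ ∈ M(A)` of (5.1), `(φ ⊗ ι)Δ(a) = φ(a)δ`. -/
structure DualPair where
  φ : A →ₗ[k] k
  φ_ne : φ ≠ 0
  /-- `(ι ⊗ φ)((b ⊗ 1)Δ(a)) = φ(a) b` : left invariance of the integral. -/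
  φ_int : ∀ a b : A, apT k A A φ (H.T2 (b ⊗ₜ a)) = φ a • b
  /-- `(ι ⊗ φ)(Δ(a)(b ⊗ 1)) = φ(a) b` : left invariance of the integral. -/
  φ_int' : ∀ a b : A, apT k A A φ (H.T3 (a ⊗ₜ b)) = φ a • b
  hat : A ≃ₗ[k] Ahat
  hat' : A ≃ₗ[k] Ahat
  ev : Ahat →ₗ[k] A →ₗ[k] k
  ev_hat : ∀ a x : A, ev (hat a) x = φ (x * a)
  ev_hat' : ∀ b x : A, ev (hat' b) x = φ (b * x)
  /-- the product of `Â`: `(φ(– a) u)(c) = Σ φ(c₍₁₎ a) u(c₍₂₎)`. -/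
  ev_mul : ∀ (a : A) (u : Ahat) (c : A),
      ev (hat a * u) c
        = (TensorProduct.lid k k) ((map φ (ev u)) (H.T3 (c ⊗ₜ a)))
  /-- identity (2.5): `Δ̂(φ(– a))(1 ⊗ φ(– b)) = φ(– S⁻¹(b₍₁₎)a) ⊗ φ(– b₍₂₎)`,
  read through `hat⁻¹ ⊗ hat⁻¹` and covered on the right leg by `c`. -/
  hatT1 : ∀ a b c : A,
      (lTensor A (LinearMap.mulRight k c))
          ((map hat.symm.toLinearMap hat.symm.toLinearMap) (Hh.T1 (hat a ⊗ₜ hat b)))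
        = rTensor A (LinearMap.mulRight k a ∘ₗ H.S.symm.toLinearMap) (H.T1 (b ⊗ₜ c))
  /-- identity (2.6): `(ι ⊗ Ŝ)((1 ⊗ Ŝ⁻¹(φ(– b)))Δ̂(φ(– a))) = φ(– b₍₁₎a) ⊗ φ(– b₍₂₎)`,
  read through `hat⁻¹ ⊗ hat⁻¹` and covered on the right leg by `c`. -/
  hatT2 : ∀ a b c : A,
      (lTensor A (LinearMap.mulRight k c))
          ((map hat.symm.toLinearMap hat.symm.toLinearMap)
            ((lTensor Ahat Hh.S.toLinearMap) (Hh.T4 (hat a ⊗ₜ Hh.S.symm (hat b)))))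
        = rTensor A (LinearMap.mulRight k a) (H.T1 (b ⊗ₜ c))
  /-- the modular element `δ`, with `(φ ⊗ ι)(Δ(a)(1 ⊗ b)) = φ(a) • (δ b)`. -/
  delta : Multiplier k A
  deltaInv : Multiplier k A
  delta_inv : delta * deltaInv = 1 ∧ deltaInv * delta = 1
  hdelta : ∀ a b : A, apF k A φ (H.T1 (a ⊗ₜ b)) = φ a • delta.U b

end Dual

section Helpers

/-- If all "coordinate" images of `d : R ⊗ A` under functionals on `R` vanish, `d = 0`. -/
lemma coord_zero' {k : Type*} [Field k] {R A : Type*} [AddCommGroup R] [Module k R]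
    [AddCommGroup A] [Module k A] (d : R ⊗[k] A)
    (h : ∀ f : R →ₗ[k] k, (TensorProduct.lid k A) (rTensor A f d) = 0) : d = 0 := by
  classical
  let b := Module.Basis.ofVectorSpace k R
  have key : ∀ (t : R ⊗[k] A) (i), (TensorProduct.finsuppScalarLeft k A _)
      ((TensorProduct.congr b.repr (LinearEquiv.refl k A)) t) i
      = (TensorProduct.lid k A) (rTensor A (b.coord i) t) := by
    intro t i
    induction t using TensorProduct.induction_on with
    | zero => simp
    | add u v hu hv => simp [hu, hv]
    | tmul y a => simp [TensorProduct.finsuppScalarLeft_apply_tmul_apply, Module.Basis.coord_apply]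
  have h0 : (TensorProduct.congr b.repr (LinearEquiv.refl k A)) d = 0 := by
    apply (TensorProduct.finsuppScalarLeft k A _).injective
    rw [map_zero]
    ext i
    rw [key d i, h (b.coord i)]
    rfl
  have := (TensorProduct.congr b.repr (LinearEquiv.refl k A)).injective
  apply this
  rw [h0, map_zero]

lemma zero_of_mulRight' {k : Type*} [Field k] {R A : Type*}
    [AddCommGroup R] [Module k R]
    [NonUnitalRing A] [Module k A] [SMulCommClass k A A] [IsScalarTower k A A]
    (hA : NondegProd A) (d : R ⊗[k] A)
    (h : ∀ a : A, lTensor R (LinearMap.mulRight k a) d = 0) : d = 0 := by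
  apply coord_zero'
  intro f
  apply hA.1
  intro a
  have comm : ∀ t : R ⊗[k] A, (TensorProduct.lid k A) (rTensor A f t) * a
      = (TensorProduct.lid k A) (rTensor A f (lTensor R (LinearMap.mulRight k a) t)) := by
    intro t
    induction t using TensorProduct.induction_on with
    | zero => simp
    | add u v hu hv => simp [add_mul, hu, hv]
    | tmul y c => simp [smul_mul_assoc]
  rw [comm, h a]; simp

lemma zero_of_mulLeft' {k : Type*} [Field k] {R A : Type*}
    [AddCommGroup R] [Module k R]
    [NonUnitalRing A] [Module k A] [SMulCommClass k A A] [IsScalarTower k A A]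
    (hA : NondegProd A) (d : R ⊗[k] A)
    (h : ∀ a : A, lTensor R (LinearMap.mulLeft k a) d = 0) : d = 0 := by
  apply coord_zero'
  intro f
  apply hA.2
  intro a
  have comm : ∀ t : R ⊗[k] A, a * (TensorProduct.lid k A) (rTensor A f t)
      = (TensorProduct.lid k A) (rTensor A f (lTensor R (LinearMap.mulLeft k a) t)) := by
    intro t
    induction t using TensorProduct.induction_on with
    | zero => simp
    | add u v hu hv => simp [mul_add, hu, hv]
    | tmul y c => simp [mul_smul_comm]
  rw [comm, h a]; simp

end Helpers

section Statements
variable {k}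
variable {A : Type*} [NonUnitalRing A] [Module k A] [SMulCommClass k A A] [IsScalarTower k A A]
variable {R : Type*} [NonUnitalRing R] [Module k R] [SMulCommClass k R R] [IsScalarTower k R R]

/-- **Lemma 3.7.** Let `(R, ρ, E)` be a partial `A`-comodule algebra over a regular
multiplier Hopf algebra `A`.  Then `E ρ(x) = ρ(x)` and `ρ(x) E = ρ(x)` for all `x ∈ R`. -/
theorem partial_comodule_E_absorbs
    (H : MHA k A) (hR : NondegProd R)
    (ρ : R →ₗ[k] Multiplier k (R ⊗[k] A)) (E : Multiplier k (R ⊗[k] A))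
    (rmap : R →ₗ[k] A →ₗ[k] R ⊗[k] A) (lmap : A →ₗ[k] R →ₗ[k] R ⊗[k] A)
    (h : IsPComod H R ρ E rmap lmap) (x : R) :
    E * ρ x = ρ x ∧ ρ x * E = ρ x := by
  classical
  by_cases htriv : ∀ c : A, c = 0
  · -- trivial case: `A = 0`, hence `R ⊗ A = 0`
    have h0 : ∀ t : R ⊗[k] A, t = 0 := by
      intro t
      induction t using TensorProduct.induction_on with
      | zero => rfl
      | add u v hu hv => rw [hu, hv, add_zero]
      | tmul y c => rw [htriv c, TensorProduct.tmul_zero]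
    refine ⟨Multiplier.ext ?_ ?_, Multiplier.ext ?_ ?_⟩ <;>
      · apply LinearMap.ext
        intro t
        rw [h0 t]
        simp
  · push_neg at htriv
    obtain ⟨c₀, hc₀⟩ := htriv
    -- the counit is nonzero
    have hcounit : ∃ a₀ : A, H.counit a₀ ≠ 0 := by
      by_contra hcon
      push_neg at hcon
      apply hc₀
      apply H.nondeg.1
      intro b
      have hz : ∀ u : A ⊗[k] A, apF k A H.counit u = 0 := by
        intro u
        induction u using TensorProduct.induction_on with
        | zero => simp
        | add u v hu hv => simp [hu, hv]
        | tmul p q => simp [hcon p]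
      rw [← H.hcounit1 c₀ b, hz]
    obtain ⟨a₀, ha₀⟩ := hcounit
    -- elements of the form `y ⊗ (u * v)` span `R ⊗ A`
    set Sgen : Set (R ⊗[k] A) := {t | ∃ y : R, ∃ u v : A, t = y ⊗ₜ[k] (u * v)} with hSgen
    have hspan : ∀ t : R ⊗[k] A, t ∈ Submodule.span k Sgen := by
      intro t
      induction t using TensorProduct.induction_on with
      | zero => exact zero_mem _
      | add u v hu hv => exact add_mem hu hv
      | tmul y c =>
        have hc : H.counit a₀ • c
            = LinearMap.mul' k A ((rTensor A H.S.toLinearMap) (H.T1 (a₀ ⊗ₜ c))) :=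
          (H.hS1 a₀ c).symm
        have hc2 : c = (H.counit a₀)⁻¹ •
            LinearMap.mul' k A ((rTensor A H.S.toLinearMap) (H.T1 (a₀ ⊗ₜ c))) := by
          rw [← hc, smul_smul, inv_mul_cancel₀ ha₀, one_smul]
        rw [hc2, TensorProduct.tmul_smul]
        refine Submodule.smul_mem _ _ ?_
        generalize H.T1 (a₀ ⊗ₜ c) = u
        induction u using TensorProduct.induction_on with
        | zero => simp
        | add u₁ u₂ h₁ h₂ =>
          rw [map_add, map_add, TensorProduct.tmul_add]
          exact add_mem h₁ h₂
        | tmul p q =>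
          exact Submodule.subset_span ⟨y, H.S p, q, by simp [LinearMap.mul'_apply]⟩
    have EUid : ∀ u : R ⊗[k] A, E.U (E.U u) = E.U u := by
      intro u
      have : (E * E).U u = E.U u := by rw [h.E_idem]
      simpa using this
    have EVid : ∀ u : R ⊗[k] A, E.V (E.V u) = E.V u := by
      intro u
      have : (E * E).V u = E.V u := by rw [h.E_idem]
      simpa using this
    -- U-part of `E * ρ x = ρ x`
    have hU1 : E.U ∘ₗ (ρ x).U = (ρ x).U := by
      apply LinearMap.ext
      intro t
      have hle : Submodule.span k Sgen ≤ LinearMap.ker (E.U ∘ₗ (ρ x).U - (ρ x).U) := by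
        rw [Submodule.span_le]
        rintro _ ⟨y, u, v, rfl⟩
        rw [SetLike.mem_coe, LinearMap.mem_ker, LinearMap.sub_apply, LinearMap.comp_apply,
          sub_eq_zero]
        have h1 : (ρ x).U (y ⊗ₜ[k] (u * v)) = rmap x u * (y ⊗ₜ[k] v) := by
          have e0 : y ⊗ₜ[k] (u * v) = (oneT k R A u).U (y ⊗ₜ[k] v) := by simp [oneT]
          rw [e0]
          have e1 : (ρ x).U ((oneT k R A u).U (y ⊗ₜ[k] v))
              = (ρ x * oneT k R A u).U (y ⊗ₜ[k] v) := rfl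
          rw [e1, h.hrmap]
          rfl
        obtain ⟨z, hz⟩ := h.c2l x u
        rw [h1, E.U_mul, hz, EUid z]
      have := hle (hspan t)
      rw [LinearMap.mem_ker, LinearMap.sub_apply, sub_eq_zero] at this
      exact this
    -- V-part of `E * ρ x = ρ x`
    have hV1 : (ρ x).V ∘ₗ E.V = (ρ x).V := by
      apply LinearMap.ext
      intro t
      rw [LinearMap.comp_apply]
      have key : ∀ a : A, lTensor R (LinearMap.mulRight k a)
          ((ρ x).V (E.V t) - (ρ x).V t) = 0 := by
        intro a
        obtain ⟨z, hz⟩ := h.c2l x a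
        have e1 : ∀ w : R ⊗[k] A, lTensor R (LinearMap.mulRight k a) ((ρ x).V w)
            = w * rmap x a := by
          intro w
          have e0 : lTensor R (LinearMap.mulRight k a) ((ρ x).V w)
              = (ρ x * oneT k R A a).V w := rfl
          rw [e0, h.hrmap]
          rfl
        rw [map_sub, e1, e1, hz, E.compat t (E.U z), EUid z, sub_self]
      exact sub_eq_zero.mp (zero_of_mulRight' H.nondeg _ key)
    -- V-part of `ρ x * E = ρ x`
    have hV2 : E.V ∘ₗ (ρ x).V = (ρ x).V := by
      apply LinearMap.ext
      intro t
      have hle : Submodule.span k Sgen ≤ LinearMap.ker (E.V ∘ₗ (ρ x).V - (ρ x).V) := by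
        rw [Submodule.span_le]
        rintro _ ⟨y, u, v, rfl⟩
        rw [SetLike.mem_coe, LinearMap.mem_ker, LinearMap.sub_apply, LinearMap.comp_apply,
          sub_eq_zero]
        have h1 : (ρ x).V (y ⊗ₜ[k] (u * v)) = (y ⊗ₜ[k] u) * lmap v x := by
          have e0 : y ⊗ₜ[k] (u * v) = (oneT k R A v).V (y ⊗ₜ[k] u) := by simp [oneT]
          rw [e0]
          have e1 : (ρ x).V ((oneT k R A v).V (y ⊗ₜ[k] u))
              = (oneT k R A v * ρ x).V (y ⊗ₜ[k] u) := rfl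
          rw [e1, h.hlmap]
          rfl
        obtain ⟨z, hz⟩ := h.c2r v x
        rw [h1, E.V_mul, hz, EVid z]
      have := hle (hspan t)
      rw [LinearMap.mem_ker, LinearMap.sub_apply, sub_eq_zero] at this
      exact this
    -- U-part of `ρ x * E = ρ x`
    have hU2 : (ρ x).U ∘ₗ E.U = (ρ x).U := by
      apply LinearMap.ext
      intro t
      rw [LinearMap.comp_apply]
      have key : ∀ a : A, lTensor R (LinearMap.mulLeft k a)
          ((ρ x).U (E.U t) - (ρ x).U t) = 0 := by
        intro a
        obtain ⟨z, hz⟩ := h.c2r a x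
        have e2 : ∀ w : R ⊗[k] A, lTensor R (LinearMap.mulLeft k a) ((ρ x).U w)
            = lmap a x * w := by
          intro w
          have e0 : lTensor R (LinearMap.mulLeft k a) ((ρ x).U w)
              = (oneT k R A a * ρ x).U w := rfl
          rw [e0, h.hlmap]
          rfl
        rw [map_sub, e2, e2, hz, E.compat z (E.U t), EUid t, ← E.compat z t, sub_self]
      exact sub_eq_zero.mp (zero_of_mulLeft' H.nondeg _ key)
    exact ⟨Multiplier.ext hU1 hV1, Multiplier.ext hU2 hV2⟩

end Statements
end
end

section
/- Let (R, ρ, E) be a partial A-comodule algebra over a regular multiplier Hopf algebra A. Then R is a (global) A-comodule algebra via ρ if and only if E = 1_{M(R)} ⊗ 1_{M(A)}. -/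
/- ## Preliminaries: multiplier algebras and (regular) multiplier Hopf algebras -/

open scoped TensorProduct
open TensorProduct LinearMap
set_option linter.unusedSectionVars false

noncomputable section

variable (k : Type*) [Field k]

/- ## Auxiliary machinery for the proof of Proposition 3.9 -/

section AuxSep
variable {k}
variable {M N M' N' P : Type*} [AddCommGroup M] [Module k M] [AddCommGroup N] [Module k N]
  [AddCommGroup M'] [Module k M'] [AddCommGroup N'] [Module k N'] [AddCommGroup P] [Module k P]

/-- apply a functional to the right leg -/
def apRg (g : N →ₗ[k] k) : M ⊗[k] N →ₗ[k] M :=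
  (TensorProduct.rid k M).toLinearMap ∘ₗ lTensor M g

@[simp] lemma apRg_tmul (g : N →ₗ[k] k) (m : M) (n : N) :
    apRg g (m ⊗ₜ n) = g n • m := rfl

/-- apply a functional to the left leg -/
def apLf (f : M →ₗ[k] k) : M ⊗[k] N →ₗ[k] N :=
  (TensorProduct.lid k N).toLinearMap ∘ₗ rTensor N f

@[simp] lemma apLf_tmul (f : M →ₗ[k] k) (m : M) (n : N) :
    apLf f (m ⊗ₜ n) = f m • n := rfl

lemma apRg_rTensor (g : N →ₗ[k] k) (f : M →ₗ[k] M') (w : M ⊗[k] N) :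
    apRg g (rTensor N f w) = f (apRg g w) := by
  induction w with
  | zero => simp
  | add a b ha hb => simp [ha, hb]
  | tmul m n => simp

lemma apRg_lTensor (g : N →ₗ[k] k) (f : N' →ₗ[k] N) (w : M ⊗[k] N') :
    apRg g (lTensor M f w) = apRg (g ∘ₗ f) w := by
  induction w with
  | zero => simp
  | add a b ha hb => simp [ha, hb]
  | tmul m n => simp

lemma apLf_lTensor (f : M →ₗ[k] k) (f' : N →ₗ[k] N') (w : M ⊗[k] N) :
    apLf f (lTensor M f' w) = f' (apLf f w) := by
  induction w with
  | zero => simp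
  | add a b ha hb => simp [ha, hb]
  | tmul m n => simp

lemma apRg_smul_fn (c : k) (g : N →ₗ[k] k) (w : M ⊗[k] N) :
    apRg (c • g) w = c • apRg g w := by
  induction w with
  | zero => simp
  | add a b ha hb => simp [ha, hb, smul_add]
  | tmul m n => simp [smul_smul, mul_comm]

lemma apRg_assoc_symm (g : P →ₗ[k] k) (t : M ⊗[k] (N ⊗[k] P)) :
    apRg g ((TensorProduct.assoc k M N P).symm t) = lTensor M (apRg g) t := by
  induction t with
  | zero => simp
  | add a b ha hb => simp [ha, hb]
  | tmul m q =>
    induction q with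
    | zero => simp
    | add a b ha hb => simp only [tmul_add, map_add] at *; rw [ha, hb]
    | tmul n p => simp

lemma apRg_key (w : M ⊗[k] N) (i : (Module.Basis.ofVectorSpaceIndex k M))
    (j : (Module.Basis.ofVectorSpaceIndex k N)) :
    (Module.Basis.ofVectorSpace k M).repr (apRg ((Module.Basis.ofVectorSpace k N).coord j) w) i
      = ((Module.Basis.ofVectorSpace k M).tensorProduct (Module.Basis.ofVectorSpace k N)).repr w (i, j) := by
  induction w with
  | zero => simp
  | add a b ha hb => simp [ha, hb]
  | tmul m n =>
    simp [Module.Basis.tensorProduct_repr_tmul_apply, Module.Basis.coord_apply, mul_comm]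

lemma apRg_sep (w : M ⊗[k] N) (h : ∀ g : N →ₗ[k] k, apRg g w = 0) : w = 0 := by
  classical
  apply ((Module.Basis.ofVectorSpace k M).tensorProduct (Module.Basis.ofVectorSpace k N)).repr.injective
  ext ⟨i, j⟩
  rw [map_zero, Finsupp.zero_apply, ← apRg_key w i j, h ((Module.Basis.ofVectorSpace k N).coord j),
    map_zero, Finsupp.zero_apply]

lemma apRg_comm (f : M →ₗ[k] k) (w : M ⊗[k] N) :
    apRg f (TensorProduct.comm k M N w) = apLf f w := by
  induction w with
  | zero => simp
  | add a b ha hb => simp [ha, hb]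
  | tmul m n => simp

lemma apLf_sep (w : M ⊗[k] N) (h : ∀ f : M →ₗ[k] k, apLf f w = 0) : w = 0 := by
  have hc := apRg_sep (TensorProduct.comm k M N w) (fun f => by rw [apRg_comm]; exact h f)
  have := congrArg (TensorProduct.comm k M N).symm hc
  simpa using this

lemma exists_psum (w : M ⊗[k] N) : ∃ l : List (M × N), psum k l = w := by
  induction w with
  | zero => exact ⟨[], rfl⟩
  | add a b ha hb =>
    obtain ⟨la, hla⟩ := ha; obtain ⟨lb, hlb⟩ := hb
    exact ⟨la ++ lb, by simp [psum, ← hla, ← hlb]⟩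
  | tmul m n => exact ⟨[(m, n)], by simp [psum]⟩

lemma apRg_psum (g : N →ₗ[k] k) (l : List (M × N)) :
    apRg g (psum k l) = (l.map fun p => g p.2 • p.1).sum := by
  rw [psum, map_list_sum, List.map_map]
  congr 1

lemma lift_psum (B : M →ₗ[k] N →ₗ[k] P) (l : List (M × N)) :
    TensorProduct.lift B (psum k l) = (l.map fun p => B p.1 p.2).sum := by
  rw [psum, map_list_sum, List.map_map]
  congr 1

lemma map_psum (f : M ⊗[k] N →ₗ[k] P) (l : List (M × N)) :
    f (psum k l) = (l.map fun p => f (p.1 ⊗ₜ p.2)).sum := by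
  rw [psum, map_list_sum, List.map_map]
  congr 1

lemma lTensor_equiv_inj (e : N ≃ₗ[k] N') : Function.Injective (lTensor M e.toLinearMap) := by
  have he : lTensor M e.toLinearMap
      = (TensorProduct.congr (LinearEquiv.refl k M) e).toLinearMap := by
    apply TensorProduct.ext'
    intro m n
    simp [TensorProduct.congr_tmul]
  rw [he]
  exact (TensorProduct.congr (LinearEquiv.refl k M) e).injective

end AuxSep

section AuxNondeg
variable {k}
variable {M N : Type*} [NonUnitalRing M] [Module k M] [SMulCommClass k M M] [IsScalarTower k M M]
  [NonUnitalRing N] [Module k N] [SMulCommClass k N N] [IsScalarTower k N N]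

lemma apLf_mul_tmul (f : M →ₗ[k] k) (z : M ⊗[k] N) (y : M) (a : N) :
    apLf f (z * (y ⊗ₜ a)) = (apLf (f ∘ₗ mulRight k y) z) * a := by
  induction z with
  | zero => simp
  | add u v hu hv => simp [add_mul, hu, hv]
  | tmul m n => simp [Algebra.TensorProduct.tmul_mul_tmul, smul_mul_assoc]

lemma apLf_tmul_mul (f : M →ₗ[k] k) (z : M ⊗[k] N) (y : M) (a : N) :
    apLf f ((y ⊗ₜ a) * z) = a * (apLf (f ∘ₗ mulLeft k y) z) := by
  induction z with
  | zero => simp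
  | add u v hu hv => simp [mul_add, hu, hv]
  | tmul m n => simp [Algebra.TensorProduct.tmul_mul_tmul, mul_smul_comm]

lemma apLf_comp_mulRight (f : M →ₗ[k] k) (y : M) (z : M ⊗[k] N) :
    apLf (f ∘ₗ mulRight k y) z = apLf f (rTensor N (mulRight k y) z) := by
  induction z with
  | zero => simp
  | add u v hu hv => simp [hu, hv]
  | tmul m n => simp

lemma apLf_comp_mulLeft (f : M →ₗ[k] k) (y : M) (z : M ⊗[k] N) :
    apLf (f ∘ₗ mulLeft k y) z = apLf f (rTensor N (mulLeft k y) z) := by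
  induction z with
  | zero => simp
  | add u v hu hv => simp [hu, hv]
  | tmul m n => simp

lemma nondeg_tensor (hM : NondegProd M) (hN : NondegProd N) :
    NondegProd (M ⊗[k] N) := by
  constructor
  · intro z hz
    have h1 : ∀ (y : M), rTensor N (mulRight k y) z = 0 := by
      intro y
      apply apLf_sep
      intro f
      rw [← apLf_comp_mulRight]
      apply hN.1
      intro a
      rw [← apLf_mul_tmul, hz (y ⊗ₜ a), map_zero]
    apply apRg_sep
    intro g
    apply hM.1
    intro y
    have := congrArg (apRg g) (h1 y)
    rw [apRg_rTensor] at this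
    simpa using this
  · intro z hz
    have h1 : ∀ (y : M), rTensor N (mulLeft k y) z = 0 := by
      intro y
      apply apLf_sep
      intro f
      rw [← apLf_comp_mulLeft]
      apply hN.2
      intro a
      rw [← apLf_tmul_mul, hz (y ⊗ₜ a), map_zero]
    apply apRg_sep
    intro g
    apply hM.2
    intro y
    have := congrArg (apRg g) (h1 y)
    rw [apRg_rTensor] at this
    simpa using this

end AuxNondeg

section AuxMHA
variable {k}
variable {A : Type*} [NonUnitalRing A] [Module k A] [SMulCommClass k A A] [IsScalarTower k A A]

lemma apRg_eq_apT_AA (g : A →ₗ[k] k) : (apRg g : A ⊗[k] A →ₗ[k] A) = apT k A A g := rfl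

lemma mulLeft_T1 (H : MHA k A) (y c d : A) :
    rTensor A (mulLeft k y) (H.T1 (c ⊗ₜ d)) = lTensor A (mulRight k d) (H.T2 (y ⊗ₜ c)) := by
  have nAA : NondegProd (A ⊗[k] A) := nondeg_tensor H.nondeg H.nondeg
  have key : ∀ t : A ⊗[k] A,
      rTensor A (mulLeft k y) (H.T1 (c ⊗ₜ d)) * t
        = lTensor A (mulRight k d) (H.T2 (y ⊗ₜ c)) * t := by
    intro t
    have h1 : rTensor A (mulLeft k y) (H.T1 (c ⊗ₜ d)) = (tOne k A A y).U (H.T1 (c ⊗ₜ d)) := rfl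
    have h2 : lTensor A (mulRight k d) (H.T2 (y ⊗ₜ c)) = (oneT k A A d).V (H.T2 (y ⊗ₜ c)) := rfl
    rw [h1, h2, (oneT k A A d).compat, ← (tOne k A A y).U_mul]
    have h3 : H.T1 (c ⊗ₜ d) * t = (Multiplier.incl (k := k) (H.T1 (c ⊗ₜ d))).U t := rfl
    rw [h3, ← H.hT1]
    have h4 : (tOne k A A y).U ((H.comul c * oneT k A A d).U t)
        = (tOne k A A y * H.comul c).U ((oneT k A A d).U t) := rfl
    rw [h4, H.hT2]
    rfl
  have h0 := nAA.1
      (rTensor A (mulLeft k y) (H.T1 (c ⊗ₜ d)) - lTensor A (mulRight k d) (H.T2 (y ⊗ₜ c)))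
      (fun t => by rw [sub_mul, key t, sub_self])
  exact sub_eq_zero.mp h0

lemma apRg_counit_T1 (H : MHA k A) (c d : A) :
    apRg H.counit (H.T1 (c ⊗ₜ d)) = H.counit d • c := by
  have key : ∀ y : A,
      y * apRg H.counit (H.T1 (c ⊗ₜ d)) = y * (H.counit d • c) := by
    intro y
    have h1 : y * apRg H.counit (H.T1 (c ⊗ₜ d))
        = mulLeft k y (apRg H.counit (H.T1 (c ⊗ₜ d))) := rfl
    rw [h1, ← apRg_rTensor H.counit (mulLeft k y), mulLeft_T1 H y c d, apRg_lTensor]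
    have h2 : (H.counit ∘ₗ mulRight k d) = H.counit d • H.counit :=
      LinearMap.ext fun e => by simp [H.counit_mul, mul_comm]
    rw [h2, apRg_smul_fn, apRg_eq_apT_AA, H.hcounit2, mul_smul_comm]
  have h0 := H.nondeg.2
      (apRg H.counit (H.T1 (c ⊗ₜ d)) - H.counit d • c)
      (fun y => by rw [mul_sub, key y, sub_self])
  exact sub_eq_zero.mp h0

lemma apRg_counit_T1' (H : MHA k A) (w : A ⊗[k] A) :
    apRg H.counit (H.T1 w) = apRg H.counit w := by
  induction w with
  | zero => simp
  | add u v hu hv => simp only [map_add, hu, hv]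
  | tmul c d => rw [apRg_counit_T1 H c d, apRg_tmul]

lemma apRg_counit_T1symm (H : MHA k A) (w : A ⊗[k] A) :
    apRg H.counit (H.T1.symm w) = apRg H.counit w := by
  have h0 := apRg_counit_T1' H (H.T1.symm w)
  rw [LinearEquiv.apply_symm_apply] at h0
  exact h0.symm

lemma exists_counit_one (H : MHA k A) (hA : ∃ a : A, H.counit a ≠ 0) :
    ∃ b₀ : A, H.counit b₀ = 1 := by
  obtain ⟨a, ha⟩ := hA
  exact ⟨(H.counit a)⁻¹ • a, by simp [inv_mul_cancel₀ ha]⟩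

lemma spanA_mul (H : MHA k A) (b₀ : A) (hb₀ : H.counit b₀ = 1) (c : A) :
    c ∈ Submodule.span k {w : A | ∃ a b : A, w = a * b} := by
  obtain ⟨l, hl⟩ := exists_psum (H.T1.symm (b₀ ⊗ₜ c))
  have h1 : c = (l.map fun p => p.1 * p.2).sum := by
    calc c = H.counit b₀ • c := by rw [hb₀, one_smul]
    _ = apF k A H.counit (b₀ ⊗ₜ c) := by simp
    _ = apF k A H.counit (H.T1 (H.T1.symm (b₀ ⊗ₜ c))) := by rw [LinearEquiv.apply_symm_apply]
    _ = apF k A H.counit (H.T1 (psum k l)) := by rw [hl]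
    _ = (l.map fun p => p.1 * p.2).sum := by
        rw [show (H.T1 (psum k l) : A ⊗[k] A) = H.T1.toLinearMap (psum k l) from rfl,
          ← LinearMap.comp_apply, map_psum ((apF k A H.counit) ∘ₗ H.T1.toLinearMap) l]
        congr 1
        ext p
        simp [H.hcounit1]
  rw [h1]
  refine list_sum_mem ?_
  intro x hx
  obtain ⟨p, _, rfl⟩ := List.mem_map.mp hx
  exact Submodule.subset_span ⟨p.1, p.2, rfl⟩

end AuxMHA

section AuxRA
variable {k}
variable {A : Type*} [NonUnitalRing A] [Module k A] [SMulCommClass k A A] [IsScalarTower k A A]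
variable {R : Type*} [NonUnitalRing R] [Module k R] [SMulCommClass k R R] [IsScalarTower k R R]

/-- the bilinear map `(c, d) ↦ (ι ⊗ Δ)(ρ(x))(1 ⊗ c ⊗ d)`, fully covered -/
def gammaB (H : MHA k A) (rmap : R →ₗ[k] A →ₗ[k] R ⊗[k] A) (x : R) :
    A →ₗ[k] A →ₗ[k] (R ⊗[k] A) ⊗[k] A :=
  LinearMap.mk₂ k
    (fun c d => (TensorProduct.assoc k R A A).symm
      ((lTensor R (H.T1.toLinearMap ∘ₗ (TensorProduct.mk k A A).flip d)) (rmap x c)))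
    (fun c c' d => by rw [map_add, map_add, map_add])
    (fun s c d => by rw [map_smul, map_smul, map_smul])
    (fun c d d' => by
      rw [map_add ((TensorProduct.mk k A A).flip), LinearMap.comp_add,
        lTensor_add, LinearMap.add_apply, map_add])
    (fun s c d => by
      rw [map_smul ((TensorProduct.mk k A A).flip), LinearMap.comp_smul,
        lTensor_smul, LinearMap.smul_apply, map_smul])

@[simp] lemma gammaB_apply (H : MHA k A) (rmap : R →ₗ[k] A →ₗ[k] R ⊗[k] A) (x : R) (c d : A) :
    gammaB H rmap x c d = (TensorProduct.assoc k R A A).symm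
      ((lTensor R (H.T1.toLinearMap ∘ₗ (TensorProduct.mk k A A).flip d)) (rmap x c)) := rfl

/-- the bilinear map `(z'⊗c, y⊗e) ↦ z'y ⊗ (c ⊗ e)` -/
def bmap : (R ⊗[k] A) →ₗ[k] (R ⊗[k] A) →ₗ[k] R ⊗[k] (A ⊗[k] A) :=
  TensorProduct.lift (LinearMap.mk₂ k
    (fun z' c => TensorProduct.map (mulLeft k z') ((TensorProduct.mk k A A) c))
    (fun z z' c => by
      rw [show mulLeft k (z + z') = mulLeft k z + mulLeft k z' from
        LinearMap.ext fun r => add_mul z z' r, map_add_left])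
    (fun s z c => by
      rw [show mulLeft k (s • z) = s • mulLeft k z from
        LinearMap.ext fun r => smul_mul_assoc s z r, map_smul_left])
    (fun z c c' => by rw [map_add, map_add_right])
    (fun s z c => by rw [map_smul, map_smul_right]))

@[simp] lemma bmap_tmul (z' y : R) (c e : A) :
    bmap ((z' ⊗ₜ c : R ⊗[k] A)) (y ⊗ₜ e) = (z' * y) ⊗ₜ (c ⊗ₜ e) := by
  simp [bmap]

lemma rTensor_mulRight_add (y y' : R) (z : R ⊗[k] A) :
    rTensor A (mulRight k (y + y')) z
      = rTensor A (mulRight k y) z + rTensor A (mulRight k y') z := by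
  rw [show mulRight k (y + y') = mulRight k y + mulRight k y' from
    LinearMap.ext fun r => mul_add r y y', rTensor_add, LinearMap.add_apply]

lemma Ia (H : MHA k A) (z u : R ⊗[k] A) (d : A) (g : A →ₗ[k] k) :
    z * (lTensor R (apRg g ∘ₗ H.T1.toLinearMap ∘ₗ (TensorProduct.mk k A A).flip d) u)
      = lTensor R (apRg (g ∘ₗ mulRight k d) ∘ₗ H.T2.toLinearMap) (bmap z u) := by
  induction z with
  | zero => rw [zero_mul, map_zero, LinearMap.zero_apply, map_zero]
  | add z₁ z₂ h₁ h₂ => rw [add_mul, h₁, h₂, map_add, LinearMap.add_apply, map_add]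
  | tmul z' c =>
    induction u with
    | zero => rw [map_zero, mul_zero, map_zero, map_zero]
    | add u₁ u₂ h₁ h₂ => rw [map_add, mul_add, h₁, h₂, map_add, map_add]
    | tmul y e =>
      rw [lTensor_tmul, bmap_tmul, lTensor_tmul, Algebra.TensorProduct.tmul_mul_tmul]
      congr 1
      rw [LinearMap.comp_apply, LinearMap.comp_apply, LinearMap.comp_apply]
      rw [show ((TensorProduct.mk k A A).flip d) e = e ⊗ₜ d from rfl]
      rw [show c * apRg g (H.T1.toLinearMap (e ⊗ₜ d))
          = mulLeft k c (apRg g (H.T1 (e ⊗ₜ d))) from rfl,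
        ← apRg_rTensor g (mulLeft k c), mulLeft_T1 H c e d, apRg_lTensor]
      rfl

lemma Ib (z u : R ⊗[k] A) (g : A →ₗ[k] k) :
    lTensor R (apRg g) (bmap z u) = rTensor A (mulRight k (apRg g u)) z := by
  induction z with
  | zero => rw [map_zero, LinearMap.zero_apply, map_zero, map_zero]
  | add z₁ z₂ h₁ h₂ => rw [map_add, LinearMap.add_apply, map_add, h₁, h₂, map_add]
  | tmul z' c =>
    induction u with
    | zero => rw [map_zero, map_zero, map_zero]; simp
    | add u₁ u₂ h₁ h₂ => rw [map_add, map_add, h₁, h₂, map_add, rTensor_mulRight_add]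
    | tmul y e =>
      rw [bmap_tmul, lTensor_tmul, apRg_tmul, apRg_tmul, rTensor_tmul]
      simp [mul_smul_comm, smul_tmul']

lemma heqP (g : A →ₗ[k] k) (d : A) (P : R ⊗[k] (A ⊗[k] A)) :
    apRg g (lTensor (R ⊗[k] A) (mulRight k d) ((TensorProduct.assoc k R A A).symm P))
      = lTensor R (apRg (g ∘ₗ mulRight k d)) P := by
  induction P with
  | zero => rw [map_zero, map_zero, map_zero, map_zero]
  | add u v hu hv => simp only [map_add, hu, hv]
  | tmul r q =>
    induction q with
    | zero => simp
    | add q₁ q₂ h₁ h₂ => simp only [tmul_add, map_add] at *; rw [h₁, h₂]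
    | tmul c e => simp

lemma killP (hN : NondegProd A) (P : R ⊗[k] (A ⊗[k] A))
    (hP : ∀ (g : A →ₗ[k] k) (d : A), lTensor R (apRg (g ∘ₗ mulRight k d)) P = 0) :
    P = 0 := by
  have heq : ∀ (g : A →ₗ[k] k) (d : A),
      apRg g (lTensor (R ⊗[k] A) (mulRight k d) ((TensorProduct.assoc k R A A).symm P))
        = lTensor R (apRg (g ∘ₗ mulRight k d)) P := fun g d => heqP g d P
  have hQ : ∀ d : A,
      lTensor (R ⊗[k] A) (mulRight k d) ((TensorProduct.assoc k R A A).symm P) = 0 := by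
    intro d
    apply apRg_sep
    intro g
    rw [heq g d]
    exact hP g d
  have hL : ∀ Λ : (R ⊗[k] A) →ₗ[k] k, apLf Λ ((TensorProduct.assoc k R A A).symm P) = 0 := by
    intro Λ
    apply hN.1
    intro d
    have h1 := congrArg (apLf Λ) (hQ d)
    rw [apLf_lTensor, map_zero] at h1
    exact h1
  have h0 : (TensorProduct.assoc k R A A).symm P = 0 := apLf_sep _ hL
  have h1 := congrArg (TensorProduct.assoc k R A A) h0
  simpa using h1

end AuxRA

section Statements
variable {k}
variable {A : Type*} [NonUnitalRing A] [Module k A] [SMulCommClass k A A] [IsScalarTower k A A]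
variable {R : Type*} [NonUnitalRing R] [Module k R] [SMulCommClass k R R] [IsScalarTower k R R]

/-- **Proposition 3.9.** Let `(R, ρ, E)` be a partial `A`-comodule algebra over a regular
multiplier Hopf algebra `A`.  Then `R` is a (global) `A`-comodule algebra via `ρ` if and
only if `E = 1_{M(R)} ⊗ 1_{M(A)}`, i.e. `E` is the identity multiplier of `R ⊗ A`. -/
theorem partial_comodule_global_iff_E_one
    (H : MHA k A) (hR : NondegProd R)
    (ρ : R →ₗ[k] Multiplier k (R ⊗[k] A)) (E : Multiplier k (R ⊗[k] A))
    (rmap : R →ₗ[k] A →ₗ[k] R ⊗[k] A) (lmap : A →ₗ[k] R →ₗ[k] R ⊗[k] A)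
    (h : IsPComod H R ρ E rmap lmap) :
    IsComod H R ρ rmap lmap ↔ E = 1 := by
  constructor
  · intro hc
    by_cases hA : ∃ a : A, H.counit a ≠ 0
    · obtain ⟨b₀, hb₀⟩ := exists_counit_one H hA
      have nRA : NondegProd (R ⊗[k] A) := nondeg_tensor hR H.nondeg
      -- every element of `R ⊗ A` lies in the span of elements `(1 ⊗ a)t`
      have spanRA : ∀ v : R ⊗[k] A,
          v ∈ Submodule.span k
            {w : R ⊗[k] A | ∃ (a : A) (t : R ⊗[k] A), w = (oneT k R A a).U t} := by
        intro v
        induction v with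
        | zero => exact Submodule.zero_mem _
        | add u w hu hw => exact Submodule.add_mem _ hu hw
        | tmul y c =>
          have hc' := spanA_mul H b₀ hb₀ c
          refine Submodule.span_induction
            (p := fun c' _ => (y ⊗ₜ[k] c') ∈ Submodule.span k
              {w : R ⊗[k] A | ∃ (a : A) (t : R ⊗[k] A), w = (oneT k R A a).U t})
            ?_ ?_ ?_ ?_ hc'
          · rintro w ⟨a, b, rfl⟩
            exact Submodule.subset_span ⟨a, y ⊗ₜ b, by simp [oneT]⟩
          · rw [TensorProduct.tmul_zero]; exact Submodule.zero_mem _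
          · intro c₁ c₂ _ _ h₁ h₂
            rw [TensorProduct.tmul_add]; exact Submodule.add_mem _ h₁ h₂
          · intro s c₁ _ h₁
            rw [TensorProduct.tmul_smul]; exact Submodule.smul_mem _ s h₁
      -- a multiplier of `R ⊗ A` is determined by its products with the `oneT a`
      have cancel : ∀ m m' : Multiplier k (R ⊗[k] A),
          (∀ a : A, m * oneT k R A a = m' * oneT k R A a) → m = m' := by
        intro m m' hmm
        have hU : m.U = m'.U := by
          apply LinearMap.ext
          intro t
          refine Submodule.span_induction (p := fun t _ => m.U t = m'.U t)
            ?_ ?_ ?_ ?_ (spanRA t)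
          · rintro w ⟨a, t', rfl⟩
            exact congrArg (fun n : Multiplier k (R ⊗[k] A) => n.U t') (hmm a)
          · rw [map_zero, map_zero]
          · intro u w _ _ h₁ h₂; rw [map_add, map_add, h₁, h₂]
          · intro s u _ h₁; rw [map_smul, map_smul, h₁]
        have hV : m.V = m'.V := by
          apply LinearMap.ext; intro t
          have h2 : ∀ s, (m.V t - m'.V t) * s = 0 := by
            intro s
            rw [sub_mul, m.compat, m'.compat, hU, sub_self]
          exact sub_eq_zero.mp (nRA.1 _ h2)
        exact Multiplier.ext hU hV
      -- the counit property of the coaction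
      have hcp : ∀ (x : R) (b : A), apRg H.counit (rmap x b) = H.counit b • x := by
        intro x b
        have key : ∀ a : A,
            rmap (apRg H.counit (rmap x b)) a = H.counit b • rmap x a := by
          intro a
          obtain ⟨l, hl⟩ := exists_psum (H.T1.symm (a ⊗ₜ b))
          have h1 := congrArg (apRg H.counit) (hc.coassoc x a b l hl)
          rw [apRg_rTensor, map_list_sum, List.map_map] at h1
          have hterm : ((apRg H.counit) ∘ fun p : A × A =>
              (TensorProduct.assoc k R A A).symm
                ((lTensor R (H.T1.toLinearMap ∘ₗ (TensorProduct.mk k A A).flip p.2))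
                  (rmap x p.1)))
              = fun p : A × A => H.counit p.2 • rmap x p.1 := by
            funext p
            rw [Function.comp_apply, apRg_assoc_symm, ← LinearMap.comp_apply, ← lTensor_comp]
            have hF : apRg H.counit ∘ₗ (H.T1.toLinearMap ∘ₗ (TensorProduct.mk k A A).flip p.2)
                = H.counit p.2 • (LinearMap.id : A →ₗ[k] A) := by
              apply LinearMap.ext; intro e
              simp only [LinearMap.comp_apply, LinearMap.smul_apply, LinearMap.id_apply]
              rw [show ((TensorProduct.mk k A A).flip p.2) e = e ⊗ₜ p.2 from rfl]
              exact apRg_counit_T1 H e p.2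
            rw [hF, lTensor_smul, lTensor_id, LinearMap.smul_apply, LinearMap.id_apply]
          rw [hterm] at h1
          have h3 : (l.map fun p : A × A => H.counit p.2 • rmap x p.1).sum
              = rmap x (apRg H.counit (psum k l)) := by
            have hfg : (⇑(rmap x) ∘ fun p : A × A => H.counit p.2 • p.1)
                = fun p : A × A => H.counit p.2 • rmap x p.1 :=
              funext fun p => by simp
            rw [apRg_psum, map_list_sum, List.map_map, hfg]
          rw [h3, hl, apRg_counit_T1symm, apRg_tmul, map_smul] at h1
          rw [LinearMap.flip_apply] at h1
          exact h1
        have hm : ∀ a : A, ρ (apRg H.counit (rmap x b)) * oneT k R A a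
            = ρ (H.counit b • x) * oneT k R A a := by
          intro a
          rw [h.hrmap, h.hrmap]
          exact congrArg _ (by rw [key a, map_smul, LinearMap.smul_apply])
        exact h.ρ_inj (cancel _ _ hm)
      -- Step 1: E.U fixes the covered coassociativity elements
      have step1 : ∀ (x : R) (u : A ⊗[k] A),
          rTensor A E.U (TensorProduct.lift (gammaB H rmap x) u)
            = TensorProduct.lift (gammaB H rmap x) u := by
        intro x u
        have key : ∀ (a b : A),
            rTensor A E.U (TensorProduct.lift (gammaB H rmap x) (H.T1.symm (a ⊗ₜ b)))
              = TensorProduct.lift (gammaB H rmap x) (H.T1.symm (a ⊗ₜ b)) := by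
          intro a b
          obtain ⟨l, hl⟩ := exists_psum (H.T1.symm (a ⊗ₜ b))
          have h1 := h.c3 x a b l hl
          have h2 := hc.coassoc x a b l hl
          have e1 : rTensor A E.U (TensorProduct.lift (gammaB H rmap x) (psum k l))
              = (l.map fun p => (rTensor A E.U) ((TensorProduct.assoc k R A A).symm
                  ((lTensor R (H.T1.toLinearMap ∘ₗ (TensorProduct.mk k A A).flip p.2))
                    (rmap x p.1)))).sum := by
            rw [← LinearMap.comp_apply, map_psum]
            congr 1
          have e2 : TensorProduct.lift (gammaB H rmap x) (psum k l)
              = (l.map fun p => (TensorProduct.assoc k R A A).symm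
                  ((lTensor R (H.T1.toLinearMap ∘ₗ (TensorProduct.mk k A A).flip p.2))
                    (rmap x p.1))).sum := by
            rw [map_psum]
            congr 1
          rw [← hl, e1, ← h1, h2, e2]
        have hmap : (TensorProduct.lift ((gammaB H rmap x).compr₂ (rTensor A E.U)))
              ∘ₗ H.T1.symm.toLinearMap
            = (TensorProduct.lift (gammaB H rmap x)) ∘ₗ H.T1.symm.toLinearMap := by
          apply TensorProduct.ext'
          intro a b
          rw [LinearMap.comp_apply, LinearMap.comp_apply, lift_compr₂, LinearMap.comp_apply]
          exact key a b
        have h3 := congrArg (fun f : A ⊗[k] A →ₗ[k] (R ⊗[k] A) ⊗[k] A => f (H.T1 u)) hmap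
        simp only [LinearMap.comp_apply] at h3
        rw [show (H.T1.symm.toLinearMap (H.T1 u) : A ⊗[k] A) = u from H.T1.symm_apply_apply u,
          lift_compr₂, LinearMap.comp_apply] at h3
        exact h3
      -- E.U fixes the functional-covered elements
      have hsfix : ∀ (x : R) (c d : A) (g : A →ₗ[k] k),
          E.U (lTensor R (apRg g ∘ₗ H.T1.toLinearMap ∘ₗ (TensorProduct.mk k A A).flip d)
              (rmap x c))
            = lTensor R (apRg g ∘ₗ H.T1.toLinearMap ∘ₗ (TensorProduct.mk k A A).flip d)
              (rmap x c) := by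
        intro x c d g
        have h1 : lTensor R (apRg g ∘ₗ H.T1.toLinearMap ∘ₗ (TensorProduct.mk k A A).flip d)
              (rmap x c)
            = apRg g (TensorProduct.lift (gammaB H rmap x) (c ⊗ₜ d)) := by
          rw [TensorProduct.lift.tmul, gammaB_apply, apRg_assoc_symm, lTensor_comp,
            LinearMap.comp_apply]
        rw [h1, ← apRg_rTensor g E.U, step1 x (c ⊗ₜ d)]
      -- E.V is the identity
      have EV : ∀ t : R ⊗[k] A, E.V t = t := by
        intro t
        have hzs : ∀ (x : R) (c d : A) (g : A →ₗ[k] k),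
            (E.V t - t) * (lTensor R
              (apRg g ∘ₗ H.T1.toLinearMap ∘ₗ (TensorProduct.mk k A A).flip d) (rmap x c)) = 0 := by
          intro x c d g
          rw [sub_mul, E.compat, hsfix x c d g, sub_self]
        have hb : ∀ (x : R) (c : A), bmap (E.V t - t) (rmap x c) = 0 := by
          intro x c
          have h2 : ∀ (g : A →ₗ[k] k) (d : A),
              lTensor R (apRg (g ∘ₗ mulRight k d))
                (lTensor R H.T2.toLinearMap (bmap (E.V t - t) (rmap x c))) = 0 := by
            intro g d
            rw [← LinearMap.comp_apply, ← lTensor_comp, ← Ia H (E.V t - t) (rmap x c) d g]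
            exact hzs x c d g
          have h3 := killP H.nondeg _ h2
          exact lTensor_equiv_inj H.T2 (by rw [h3, map_zero])
        have hx : ∀ x : R, rTensor A (mulRight k x) (E.V t - t) = 0 := by
          intro x
          have h4 := congrArg (lTensor R (apRg H.counit)) (hb x b₀)
          rw [Ib, map_zero] at h4
          rw [show apRg H.counit (rmap x b₀) = x from by rw [hcp x b₀, hb₀, one_smul]] at h4
          exact h4
        have hg : ∀ g : A →ₗ[k] k, apRg g (E.V t - t) = 0 := by
          intro g
          apply hR.1
          intro y
          have h5 := congrArg (apRg g) (hx y)
          rw [apRg_rTensor, map_zero] at h5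
          exact h5
        exact sub_eq_zero.mp (apRg_sep _ hg)
      have EU : ∀ s : R ⊗[k] A, E.U s = s := by
        intro s
        have h7 : ∀ t : R ⊗[k] A, t * (E.U s - s) = 0 := by
          intro t
          rw [mul_sub, ← E.compat, EV t, sub_self]
        exact sub_eq_zero.mp (nRA.2 _ h7)
      exact Multiplier.ext (LinearMap.ext fun w => by rw [EU w]; rfl)
        (LinearMap.ext fun w => by rw [EV w]; rfl)
    · push_neg at hA
      have hz : ∀ a : A, a = 0 := by
        have hmul : ∀ c d : A, c * d = 0 := by
          intro c d
          have hc0 : H.counit = 0 := LinearMap.ext fun a => hA a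
          have h1 := H.hcounit1 c d
          rw [hc0] at h1
          rw [show apF k A (0 : A →ₗ[k] k) = 0 from by
            rw [show apF k A (0 : A →ₗ[k] k)
                = (TensorProduct.lid k A).toLinearMap ∘ₗ rTensor A (0 : A →ₗ[k] k) from rfl,
              rTensor_zero, comp_zero], LinearMap.zero_apply] at h1
          exact h1.symm
        intro a
        exact H.nondeg.1 a (fun b => hmul a b)
      have hw : ∀ w : R ⊗[k] A, w = 0 := by
        intro w
        induction w with
        | zero => rfl
        | add u v hu hv => rw [hu, hv, add_zero]
        | tmul y c => rw [hz c, TensorProduct.tmul_zero]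
      exact Multiplier.ext (LinearMap.ext fun w => by rw [hw w, map_zero, map_zero])
        (LinearMap.ext fun w => by rw [hw w, map_zero, map_zero])
  · intro hE
    subst hE
    refine ⟨h.ρ_mul, h.ρ_inj, h.hrmap, h.hlmap, ?_⟩
    intro x a b l hl
    have h1 := h.c3 x a b l hl
    simpa [Multiplier.one_U, rTensor_id] using h1

end Statements
end
end

section
/- Let (R, ρ, E) be a partial A-comodule algebra over a regular multiplier Hopf algebra A with counit ε. Then (ι ⊗ ε)ρ(x) = x for all x ∈ R. -/
/- ## Preliminaries: multiplier algebras and (regular) multiplier Hopf algebras -/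

open scoped TensorProduct
open TensorProduct LinearMap
set_option linter.unusedSectionVars false

noncomputable section

variable (k : Type*) [Field k]

section AuxLemmas
variable {k}

namespace Aux

section Sep

variable {ι α : Type*} {M N N' : Type*} [AddCommGroup M] [Module k M]
  [AddCommGroup N] [Module k N] [AddCommGroup N'] [Module k N']

/-- Coordinate projection on the first tensor leg. -/
def proj (b : Module.Basis ι k M) (i : ι) : M ⊗[k] N →ₗ[k] N :=
  (TensorProduct.lid k N).toLinearMap ∘ₗ rTensor N (b.coord i)

lemma proj_tmul (b : Module.Basis ι k M) (i : ι) (m : M) (n : N) :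
    proj b i (m ⊗ₜ[k] n) = b.repr m i • n := by
  simp [proj, Module.Basis.coord_apply]

lemma repr_proj {κ : Type*} (bM : Module.Basis ι k M) (bN : Module.Basis κ k N) (w : M ⊗[k] N) (i : ι) (j : κ) :
    bN.repr (proj bM i w) j = (bM.tensorProduct bN).repr w (i, j) := by
  induction w with
  | zero => simp
  | tmul m n => simp [proj_tmul, Module.Basis.tensorProduct_repr_tmul_apply, map_smul, smul_eq_mul, mul_comm]
  | add u v hu hv => simp [map_add, hu, hv]

lemma eq_zero_of_proj (bM : Module.Basis ι k M) (w : M ⊗[k] N)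
    (h : ∀ i, proj (N := N) bM i w = 0) : w = 0 := by
  classical
  let bN := Module.Basis.ofVectorSpace k N
  have hp : ∀ p : ι × _, (bM.tensorProduct bN).repr w p = 0 := by
    rintro ⟨i, j⟩
    rw [← repr_proj, h i, map_zero]
    rfl
  have h0 : (bM.tensorProduct bN).repr w = 0 := Finsupp.ext hp
  exact (bM.tensorProduct bN).repr.map_eq_zero_iff.mp h0

lemma proj_lTensor (b : Module.Basis ι k M) (i : ι) (g : N →ₗ[k] N') (w : M ⊗[k] N) :
    proj b i (lTensor M g w) = g (proj b i w) := by
  induction w with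
  | zero => simp
  | tmul m n => simp [proj_tmul, map_smul]
  | add u v hu hv => simp [map_add, hu, hv]

lemma sep_l (w : M ⊗[k] N) (f : α → N →ₗ[k] N')
    (hw : ∀ a, lTensor M (f a) w = 0)
    (hf : ∀ c : N, (∀ a, f a c = 0) → c = 0) : w = 0 := by
  refine eq_zero_of_proj (Module.Basis.ofVectorSpace k M) w fun i => ?_
  refine hf _ fun a => ?_
  rw [← proj_lTensor, hw, map_zero]

lemma comm_rTensor (g : M →ₗ[k] M) (u : M ⊗[k] N) :
    (TensorProduct.comm k M N) (rTensor N g u) = lTensor N g ((TensorProduct.comm k M N) u) := by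
  induction u with
  | zero => simp
  | tmul m n => simp
  | add u v hu hv => simp [map_add, hu, hv]

lemma sep_r (w : M ⊗[k] N) (f : α → M →ₗ[k] M)
    (hw : ∀ a, rTensor N (f a) w = 0)
    (hf : ∀ c : M, (∀ a, f a c = 0) → c = 0) : w = 0 := by
  have h0 : (TensorProduct.comm k M N) w = 0 :=
    sep_l _ f (fun a => by rw [← comm_rTensor, hw, map_zero]) hf
  exact (TensorProduct.comm k M N).map_eq_zero_iff.mp h0

end Sep

section Nondeg

variable {R : Type*} [NonUnitalRing R] [Module k R] [SMulCommClass k R R] [IsScalarTower k R R]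
variable {A : Type*} [NonUnitalRing A] [Module k A] [SMulCommClass k A A] [IsScalarTower k A A]

lemma tmul_mul (r : R) (a : A) (w : R ⊗[k] A) :
    (r ⊗ₜ[k] a) * w = rTensor A (mulLeft k r) (lTensor R (mulLeft k a) w) := by
  induction w with
  | zero => simp
  | tmul s c => simp [Algebra.TensorProduct.tmul_mul_tmul]
  | add u v hu hv => simp [mul_add, map_add, hu, hv]

lemma mul_tmul' (w : R ⊗[k] A) (s : R) (c : A) :
    w * (s ⊗ₜ[k] c) = rTensor A (mulRight k s) (lTensor R (mulRight k c) w) := by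
  induction w with
  | zero => simp
  | tmul r a => simp [Algebra.TensorProduct.tmul_mul_tmul]
  | add u v hu hv => simp [add_mul, map_add, hu, hv]

lemma nondeg_left (hR : NondegProd R) (hA : NondegProd A) (w : R ⊗[k] A)
    (h : ∀ v, v * w = 0) : w = 0 := by
  refine sep_l w (fun a : A => mulLeft k a) (fun a => ?_)
    (fun c hc => hA.2 c fun a => by simpa using hc a)
  refine sep_r _ (fun r : R => mulLeft k r) (fun r => ?_)
    (fun s hs => hR.2 s fun r => by simpa using hs r)
  rw [← tmul_mul]; exact h _

lemma nondeg_right (hR : NondegProd R) (hA : NondegProd A) (w : R ⊗[k] A)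
    (h : ∀ v, w * v = 0) : w = 0 := by
  refine sep_l w (fun a : A => mulRight k a) (fun a => ?_)
    (fun c hc => hA.1 c fun a => by simpa using hc a)
  refine sep_r _ (fun r : R => mulRight k r) (fun r => ?_)
    (fun s hs => hR.1 s fun r => by simpa using hs r)
  rw [← mul_tmul']; exact h _

lemma incl_inj (hR : NondegProd R) (hA : NondegProd A) {u v : R ⊗[k] A}
    (h : Multiplier.incl (k := k) u = Multiplier.incl (k := k) v) : u = v := by
  have hU := congrArg Multiplier.U h
  have hw : ∀ w, u * w = v * w := fun w => by
    simpa using DFunLike.congr_fun hU w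
  refine sub_eq_zero.mp (nondeg_right hR hA _ fun w => ?_)
  rw [sub_mul, hw, sub_self]

lemma rT_mulLeft_mul (x : R) (u w : R ⊗[k] A) :
    rTensor A (mulLeft k x) (u * w) = rTensor A (mulLeft k x) u * w := by
  induction u with
  | zero => simp
  | add u₁ u₂ h₁ h₂ => simp [add_mul, map_add, h₁, h₂]
  | tmul r a =>
    induction w with
    | zero => simp
    | add w₁ w₂ h₁ h₂ => simp [mul_add, map_add, h₁, h₂]
    | tmul s c => simp [Algebra.TensorProduct.tmul_mul_tmul, mul_assoc]

lemma rT_compat (x : R) (u w : R ⊗[k] A) :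
    rTensor A (mulRight k x) w * u = w * rTensor A (mulLeft k x) u := by
  induction u with
  | zero => simp
  | add u₁ u₂ h₁ h₂ => simp [mul_add, map_add, h₁, h₂]
  | tmul r a =>
    induction w with
    | zero => simp
    | add w₁ w₂ h₁ h₂ => simp [add_mul, map_add, h₁, h₂]
    | tmul s c => simp [Algebra.TensorProduct.tmul_mul_tmul, mul_assoc]

lemma lT_mulL_mul (a : A) (u w : R ⊗[k] A) :
    u * lTensor R (mulLeft k a) w = lTensor R (mulRight k a) u * w := by
  induction u with
  | zero => simp
  | add u₁ u₂ h₁ h₂ => simp [add_mul, map_add, h₁, h₂]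
  | tmul r c =>
    induction w with
    | zero => simp
    | add w₁ w₂ h₁ h₂ => simp [mul_add, map_add, h₁, h₂]
    | tmul s d => simp [Algebra.TensorProduct.tmul_mul_tmul, mul_assoc]

lemma lT_mulR_mul (a : A) (u w : R ⊗[k] A) :
    lTensor R (mulRight k a) (w * u) = w * lTensor R (mulRight k a) u := by
  induction u with
  | zero => simp
  | add u₁ u₂ h₁ h₂ => simp [mul_add, map_add, h₁, h₂]
  | tmul r c =>
    induction w with
    | zero => simp
    | add w₁ w₂ h₁ h₂ => simp [add_mul, map_add, h₁, h₂]
    | tmul s d => simp [Algebra.TensorProduct.tmul_mul_tmul, mul_assoc]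

lemma tOne_mul_incl (x : R) (u : R ⊗[k] A) :
    tOne k R A x * Multiplier.incl (k := k) u
      = Multiplier.incl (k := k) (rTensor A (mulLeft k x) u) := by
  refine Multiplier.ext (LinearMap.ext fun w => rT_mulLeft_mul x u w)
    (LinearMap.ext fun w => rT_compat x u w)

lemma incl_mul_oneT (u : R ⊗[k] A) (a : A) :
    Multiplier.incl (k := k) u * oneT k R A a
      = Multiplier.incl (k := k) (lTensor R (mulRight k a) u) := by
  refine Multiplier.ext (LinearMap.ext fun w => lT_mulL_mul a u w)
    (LinearMap.ext fun w => lT_mulR_mul a u w)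

end Nondeg


section ApT

variable {A : Type*} [NonUnitalRing A] [Module k A] [SMulCommClass k A A] [IsScalarTower k A A]

lemma apT_rTensor {M M' : Type*} [NonUnitalRing M] [Module k M] [SMulCommClass k M M]
    [IsScalarTower k M M] [NonUnitalRing M'] [Module k M'] [SMulCommClass k M' M']
    [IsScalarTower k M' M'] (f : A →ₗ[k] k) (g : M →ₗ[k] M') (u : M ⊗[k] A) :
    apT k M' A f (rTensor A g u) = g (apT k M A f u) := by
  induction u with
  | zero => simp
  | tmul m a => simp [map_smul]
  | add u v hu hv => simp [map_add, hu, hv]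

variable {R : Type*} [NonUnitalRing R] [Module k R] [SMulCommClass k R R] [IsScalarTower k R R]

lemma apT_assoc (f : A →ₗ[k] k) (h : A →ₗ[k] A ⊗[k] A) (u : R ⊗[k] A) :
    apT k (R ⊗[k] A) A f ((TensorProduct.assoc k R A A).symm (lTensor R h u))
      = lTensor R (apT k A A f ∘ₗ h) u := by
  induction u with
  | zero => simp
  | add u v hu hv => simp [map_add, hu, hv]
  | tmul r c =>
    simp only [lTensor_tmul, comp_apply]
    induction h c with
    | zero => simp [tmul_zero]
    | tmul p q => simp [assoc_symm_tmul, tmul_smul]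
    | add v w hv hw => simp [tmul_add, map_add, hv, hw]

lemma apT_lT_mulRight (f : A →ₗ[k] k) (hmul : ∀ a b : A, f (a * b) = f a * f b)
    (b : A) (u : A ⊗[k] A) :
    apT k A A f (lTensor A (mulRight k b) u) = f b • apT k A A f u := by
  induction u with
  | zero => simp
  | tmul p q => simp [hmul, mul_comm, mul_smul]
  | add u v hu hv => simp [map_add, smul_add, hu, hv]

lemma psum_exists {M N : Type*} [AddCommGroup M] [Module k M] [AddCommGroup N] [Module k N]
    (u : M ⊗[k] N) : ∃ l : List (M × N), psum k l = u := by
  induction u with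
  | zero => exact ⟨[], rfl⟩
  | tmul m n => exact ⟨[(m, n)], by simp [psum]⟩
  | add u v hu hv =>
    obtain ⟨l₁, h₁⟩ := hu
    obtain ⟨l₂, h₂⟩ := hv
    exact ⟨l₁ ++ l₂, by simp [psum, ← h₁, ← h₂]⟩

lemma apT_psum (f : A →ₗ[k] k) (l : List (A × A)) :
    apT k A A f (psum k l) = (l.map fun p => f p.2 • p.1).sum := by
  induction l with
  | nil => simp [psum]
  | cons q t ih => simp [psum, map_add] at ih ⊢; simp [ih]

/-- `(ι ⊗ ε)(Δ(c)(1 ⊗ b)) = ε(b) c`. -/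
lemma counit_T1 (H : MHA k A) (c b : A) :
    apT k A A H.counit (H.T1 (c ⊗ₜ[k] b)) = H.counit b • c := by
  have key : ∀ a : A, rTensor A (mulLeft k a) (H.T1 (c ⊗ₜ[k] b))
      = lTensor A (mulRight k b) (H.T2 (a ⊗ₜ[k] c)) := by
    intro a
    have h1 : tOne k A A a * (H.comul c * oneT k A A b)
        = Multiplier.incl (k := k) (rTensor A (mulLeft k a) (H.T1 (c ⊗ₜ[k] b))) := by
      rw [H.hT1, tOne_mul_incl]
    have h2 : tOne k A A a * H.comul c * oneT k A A b
        = Multiplier.incl (k := k) (lTensor A (mulRight k b) (H.T2 (a ⊗ₜ[k] c))) := by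
      rw [H.hT2, incl_mul_oneT]
    exact incl_inj H.nondeg H.nondeg (((mul_assoc _ _ _).symm.trans h2).symm.trans h1).symm
  refine sub_eq_zero.mp (H.nondeg.2 _ fun a => ?_)
  have : a * apT k A A H.counit (H.T1 (c ⊗ₜ[k] b)) = a * (H.counit b • c) := by
    have h1 := apT_rTensor (M := A) (M' := A) H.counit (mulLeft k a) (H.T1 (c ⊗ₜ[k] b))
    rw [key a, apT_lT_mulRight H.counit H.counit_mul, H.hcounit2, mulLeft_apply] at h1
    rw [← h1, mul_smul_comm]
  rw [mul_sub, this, sub_self]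

lemma counit_T1symm (H : MHA k A) (u : A ⊗[k] A) :
    apT k A A H.counit (H.T1.symm u) = apT k A A H.counit u := by
  have hT : ∀ v : A ⊗[k] A, apT k A A H.counit (H.T1 v) = apT k A A H.counit v := by
    intro v
    induction v with
    | zero => simp
    | tmul c b => rw [counit_T1]; simp
    | add v w hv hw => simp [map_add, hv, hw]
  conv_rhs => rw [← H.T1.apply_symm_apply u, hT]

end ApT

end Aux

end AuxLemmas

section Statements
variable {k}
variable {A : Type*} [NonUnitalRing A] [Module k A] [SMulCommClass k A A] [IsScalarTower k A A]
variable {R : Type*} [NonUnitalRing R] [Module k R] [SMulCommClass k R R] [IsScalarTower k R R]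

/-- **Proposition 3.10.** If `(R, ρ, E)` is a partial `A`-comodule algebra over a regular
multiplier Hopf algebra `A` with counit `ε`, then `(ι ⊗ ε)ρ(x) = x` for all `x ∈ R`;
in covered form, `(ι ⊗ ε)(ρ(x)(1 ⊗ b)) = ε(b) x` for every `b ∈ A`. -/
theorem partial_comodule_counit
    (H : MHA k A) (hR : NondegProd R)
    (ρ : R →ₗ[k] Multiplier k (R ⊗[k] A)) (E : Multiplier k (R ⊗[k] A))
    (rmap : R →ₗ[k] A →ₗ[k] R ⊗[k] A) (lmap : A →ₗ[k] R →ₗ[k] R ⊗[k] A)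
    (h : IsPComod H R ρ E rmap lmap) :
    ∀ (x : R) (b : A), apT k R A H.counit (rmap x b) = H.counit b • x := by
  intro x b
  -- Step 1: `rmap ((ι⊗ε)(rmap x b)) a = rmap (ε(b) • x) a` for every `a`.
  have key : ∀ a : A, rmap (apT k R A H.counit (rmap x b)) a = rmap (H.counit b • x) a := by
    intro a
    obtain ⟨l, hl⟩ := Aux.psum_exists (k := k) (H.T1.symm (a ⊗ₜ[k] b))
    have main := congrArg (apT k (R ⊗[k] A) A H.counit) (h.c3 x a b l hl)
    have hco : ∀ (d : A) (u : R ⊗[k] A),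
        lTensor R (apT k A A H.counit ∘ₗ
          (H.T1.toLinearMap ∘ₗ (TensorProduct.mk k A A).flip d)) u = H.counit d • u := by
      intro d u
      induction u with
      | zero => simp
      | add u v hu hv => simp [map_add, smul_add, hu, hv]
      | tmul r c =>
        simp only [lTensor_tmul, comp_apply, LinearEquiv.coe_coe, flip_apply,
          TensorProduct.mk_apply, Aux.counit_T1, tmul_smul]
    simp only [Aux.apT_rTensor, map_list_sum, List.map_map, Function.comp_def,
      Aux.apT_assoc, hco, flip_apply, map_smul] at main
    -- now `main : rmap (apT ε (rmap x b)) a = (l.map fun p => E.U (ε p.2 • rmap x p.1)).sum`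
    have hsum : ∀ t : List (A × A), (t.map fun p => H.counit p.2 • E.U (rmap x p.1)).sum
        = E.U (rmap x ((t.map fun p : A × A => H.counit p.2 • p.1).sum)) := by
      intro t
      induction t with
      | nil => simp
      | cons q t ih => simp only [List.map_cons, List.sum_cons, map_add, map_smul, ih]
    have hsum2 : ((l.map fun p : A × A => H.counit p.2 • p.1).sum) = H.counit b • a := by
      have := Aux.apT_psum (k := k) H.counit l
      rw [hl, Aux.counit_T1symm] at this
      simpa using this.symm
    obtain ⟨u₀, hu₀⟩ := h.c2l x a
    have hEU : E.U (rmap x a) = rmap x a := by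
      have hid := congrArg Multiplier.U h.E_idem
      have : E.U (E.U u₀) = E.U u₀ := by
        have := DFunLike.congr_fun hid u₀
        simpa using this
      rw [hu₀, this]
    rw [hsum l, hsum2, map_smul, map_smul, hEU] at main
    rw [main, map_smul, LinearMap.smul_apply]
  -- Step 2: conclude via nondegeneracy.
  set y := apT k R A H.counit (rmap x b) - H.counit b • x with hy
  have hy0 : ∀ a : A, rmap y a = 0 := fun a => by
    rw [hy, map_sub, LinearMap.sub_apply, key a, sub_self]
  have hρ : ∀ a : A, ρ y * oneT k R A a = 0 := fun a => by
    rw [h.hrmap, hy0 a, ← Multiplier.inclL_apply (k := k), map_zero]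
  have hV : ∀ u : R ⊗[k] A, (ρ y).V u = 0 := by
    intro u
    refine Aux.sep_l _ (fun a : A => mulRight k a) (fun a => ?_)
      (fun c hc => H.nondeg.1 c fun a => by simpa using hc a)
    have := congrArg Multiplier.V (hρ a)
    rw [Multiplier.mul_V] at this
    exact DFunLike.congr_fun this u
  have hU : ∀ v : R ⊗[k] A, (ρ y).U v = 0 := by
    intro v
    refine Aux.nondeg_left hR H.nondeg _ fun u => ?_
    rw [← (ρ y).compat u v, hV u, zero_mul]
  have hρ0 : ρ y = 0 :=
    Multiplier.ext (LinearMap.ext fun u => by simp [hU u])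
      (LinearMap.ext fun u => by simp [hV u])
  have : y = 0 := h.ρ_inj (by rw [hρ0, map_zero])
  exact sub_eq_zero.mp this


end Statements
end
end
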